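/- For every T₀>0 and every δ>0 there exist ε>0 and a solution (x,ξ):[0,T₀]→ℝ³×ℝ³ of the Heisenberg bicharacteristic system such that g*(x(t),ξ(t))=1/4 for all t∈[0,T₀], x(0)=0, and the Euclidean norm ‖x(t)‖ is at most δ for every t∈[0,T₀]. In other words, there are non-stationary normal geodesics of the Heisenberg structure, traveled at speed 1, which remain within an arbitrarily small neighborhood of the origin during an arbitrarily long time interval. -/

import Mathlib

/-- The Heisenberg bicharacteristic system: the Hamiltonian system on ℝ³×ℝ³ associated with
`g*(x,ξ) = ξ₁² + (ξ₂ - x₁ξ₃)²`, on a set `I` of times. -/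
def HeisenbergBichar (x₁ x₂ x₃ ξ₁ ξ₂ ξ₃ : ℝ → ℝ) (I : Set ℝ) : Prop :=
  ∀ t ∈ I,
    HasDerivAt x₁ (2 * ξ₁ t) t ∧
    HasDerivAt x₂ (2 * (ξ₂ t - x₁ t * ξ₃ t)) t ∧
    HasDerivAt x₃ (-2 * x₁ t * (ξ₂ t - x₁ t * ξ₃ t)) t ∧
    HasDerivAt ξ₁ (2 * ξ₃ t * (ξ₂ t - x₁ t * ξ₃ t)) t ∧
    HasDerivAt ξ₂ 0 t ∧
    HasDerivAt ξ₃ 0 t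

/-- For every T₀>0 and δ>0 there is a normal geodesic of the Heisenberg structure, traveled at
speed 1 (i.e. `g* ≡ 1/4` along the solution), starting at the origin and remaining at Euclidean
distance at most δ of the origin during the whole time interval [0,T₀]. -/
theorem stmt_1 (T₀ δ : ℝ) (hT₀ : 0 < T₀) (hδ : 0 < δ) :
    ∃ ε > (0 : ℝ), ∃ x₁ x₂ x₃ ξ₁ ξ₂ ξ₃ : ℝ → ℝ,
      HeisenbergBichar x₁ x₂ x₃ ξ₁ ξ₂ ξ₃ (Set.Icc 0 T₀) ∧
      (∀ t ∈ Set.Icc (0 : ℝ) T₀,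
        (ξ₁ t) ^ 2 + (ξ₂ t - x₁ t * ξ₃ t) ^ 2 = 1 / 4) ∧
      x₁ 0 = 0 ∧ x₂ 0 = 0 ∧ x₃ 0 = 0 ∧
      ∀ t ∈ Set.Icc (0 : ℝ) T₀,
        Real.sqrt ((x₁ t) ^ 2 + (x₂ t) ^ 2 + (x₃ t) ^ 2) ≤ δ := by
  obtain ⟨L, hL1, hLδ⟩ : ∃ L : ℝ, 1 ≤ L ∧ 2 * (T₀ + 1) ≤ L * δ := by
    refine ⟨2 * (T₀ + 1) / δ + 1, ?_, ?_⟩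
    · have : 0 ≤ 2 * (T₀ + 1) / δ := by positivity
      linarith
    · have h : (2 * (T₀ + 1) / δ + 1) * δ = 2 * (T₀ + 1) + δ := by field_simp
      linarith
  have hLpos : 0 < L := lt_of_lt_of_le one_pos hL1
  have hLne : L ≠ 0 := ne_of_gt hLpos
  refine ⟨1, one_pos,
    (fun t => Real.sin (2 * L * t) / (2 * L)),
    (fun t => (Real.cos (2 * L * t) - 1) / (2 * L)),
    (fun t => t / (4 * L) - Real.sin (4 * L * t) / (16 * L ^ 2)),
    (fun t => Real.cos (2 * L * t) / 2),
    (fun _ => 0), (fun _ => L), ?_, ?_, ?_, ?_, ?_, ?_⟩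
  · intro t _
    have h1 : HasDerivAt (fun s : ℝ => 2 * L * s) (2 * L) t := by
      simpa using (hasDerivAt_id t).const_mul (2 * L)
    have h2 : HasDerivAt (fun s : ℝ => 4 * L * s) (4 * L) t := by
      simpa using (hasDerivAt_id t).const_mul (4 * L)
    have hsin : HasDerivAt (fun s : ℝ => Real.sin (2 * L * s))
        (Real.cos (2 * L * t) * (2 * L)) t := (Real.hasDerivAt_sin (2 * L * t)).comp t h1
    have hcos : HasDerivAt (fun s : ℝ => Real.cos (2 * L * s))
        (-Real.sin (2 * L * t) * (2 * L)) t := (Real.hasDerivAt_cos (2 * L * t)).comp t h1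
    have hsin4 : HasDerivAt (fun s : ℝ => Real.sin (4 * L * s))
        (Real.cos (4 * L * t) * (4 * L)) t := (Real.hasDerivAt_sin (4 * L * t)).comp t h2
    have hcos4 : Real.cos (4 * L * t) = 1 - 2 * Real.sin (2 * L * t) ^ 2 := by
      have : (4 : ℝ) * L * t = 2 * (2 * L * t) := by ring
      rw [this, Real.cos_two_mul, Real.cos_sq']; ring
    refine ⟨?_, ?_, ?_, ?_, hasDerivAt_const t 0, hasDerivAt_const t L⟩
    · have := hsin.div_const (2 * L)
      refine this.congr_deriv (Eq.symm ?_)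
      field_simp
    · have := (hcos.sub_const 1).div_const (2 * L)
      refine this.congr_deriv (Eq.symm ?_)
      field_simp
      ring
    · have := ((hasDerivAt_id t).div_const (4 * L)).sub (hsin4.div_const (16 * L ^ 2))
      refine this.congr_deriv (Eq.symm ?_)
      rw [hcos4]
      field_simp
      ring
    · have := hcos.div_const 2
      refine this.congr_deriv (Eq.symm ?_)
      field_simp
      ring
  · intro t _
    have h := Real.sin_sq_add_cos_sq (2 * L * t)
    field_simp
    nlinarith [h]
  · simp
  · simp
  · simp
  · intro t ht
    obtain ⟨ht0, htT⟩ := ht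
    have hs1 := Real.neg_one_le_sin (2 * L * t)
    have hs1' := Real.sin_le_one (2 * L * t)
    have hc1 := Real.neg_one_le_cos (2 * L * t)
    have hc1' := Real.cos_le_one (2 * L * t)
    have hs4 := Real.neg_one_le_sin (4 * L * t)
    have hs4' := Real.sin_le_one (4 * L * t)
    have hδ2 : (2 : ℝ) ≤ L * δ := by nlinarith
    have hb1 : (Real.sin (2 * L * t) / (2 * L)) ^ 2 ≤ δ ^ 2 / 4 := by
      rw [div_pow, div_le_div_iff₀ (by positivity) (by norm_num)]
      nlinarith [sq_nonneg (Real.sin (2 * L * t))]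
    have hb2 : ((Real.cos (2 * L * t) - 1) / (2 * L)) ^ 2 ≤ δ ^ 2 / 4 := by
      rw [div_pow, div_le_div_iff₀ (by positivity) (by norm_num)]
      nlinarith [sq_nonneg (Real.cos (2 * L * t) - 1)]
    have hx3 : t / (4 * L) - Real.sin (4 * L * t) / (16 * L ^ 2)
        = (4 * L * t - Real.sin (4 * L * t)) / (16 * L ^ 2) := by
      field_simp; ring
    have hLt : L * t ≤ L * T₀ := mul_le_mul_of_nonneg_left htT hLpos.le
    have hLLδ : L * (2 * (T₀ + 1)) ≤ L * (L * δ) := mul_le_mul_of_nonneg_left hLδ hLpos.le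
    have hu1 : 4 * L * t - Real.sin (4 * L * t) ≤ 8 * L ^ 2 * δ := by
      nlinarith [mul_nonneg hLpos.le hT₀.le]
    have hu2 : -(8 * L ^ 2 * δ) ≤ 4 * L * t - Real.sin (4 * L * t) := by
      nlinarith [mul_nonneg hLpos.le ht0, mul_nonneg hLpos.le hT₀.le]
    have hb3 : (t / (4 * L) - Real.sin (4 * L * t) / (16 * L ^ 2)) ^ 2 ≤ δ ^ 2 / 4 := by
      rw [hx3, div_pow, div_le_div_iff₀ (by positivity) (by norm_num)]
      nlinarith [hu1, hu2]
    have hsum : (Real.sin (2 * L * t) / (2 * L)) ^ 2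
        + ((Real.cos (2 * L * t) - 1) / (2 * L)) ^ 2
        + (t / (4 * L) - Real.sin (4 * L * t) / (16 * L ^ 2)) ^ 2 ≤ δ ^ 2 := by
      linarith [sq_nonneg δ]
    have h := Real.sqrt_le_sqrt hsum
    rwa [Real.sqrt_sq hδ.le] at h
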